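/- Let ρ be a density operator and σ a positive definite density operator on a finite-dimensional complex Hilbert space, let α > 1 and α' = α/(α−1). Define T := σ^{−1/(2α')} | σ^{−1/(2α')} ρ σ^{−1/(2α')} |^{α−1} σ^{−1/(2α')}. Then T is positive semidefinite, Tr[ρT] > 0, and α' log Tr[ρT] − log Tr[(σ^{1/(2α')} T σ^{1/(2α')})^{α'}] = D_α^*(ρ‖σ); i.e., this T attains the supremum in the variational expression of the sandwiched Rényi divergence. -/

import Mathlib

open Matrix
open scoped ComplexOrder Kronecker

noncomputable section

/-- Real power of a Hermitian matrix via functional calculus on its support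
(Moore–Penrose convention, also for negative powers); junk value `0` for
non-Hermitian input. -/
def Matrix.rpowH {ι : Type*} [Fintype ι] [DecidableEq ι] (A : Matrix ι ι ℂ) (p : ℝ) :
    Matrix ι ι ℂ :=
  if hA : A.IsHermitian then
    (hA.eigenvectorUnitary : Matrix ι ι ℂ) *
      Matrix.diagonal (fun i => ((hA.eigenvalues i ^ p : ℝ) : ℂ)) *
      star (hA.eigenvectorUnitary : Matrix ι ι ℂ)
  else 0

/-- The operator absolute value `|A| = (A† A)^(1/2)`. -/
def Matrix.absM {ι : Type*} [Fintype ι] [DecidableEq ι] (A : Matrix ι ι ℂ) :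
    Matrix ι ι ℂ :=
  Matrix.rpowH (Aᴴ * A) (2⁻¹ : ℝ)

/-- Real part of the trace. -/
def retr {ι : Type*} [Fintype ι] (A : Matrix ι ι ℂ) : ℝ :=
  (Matrix.trace A).re


/-- Sandwiched Rényi divergence
`D_α^*(ρ‖σ) = (α-1)⁻¹ log Tr[(σ^{(1-α)/(2α)} ρ σ^{(1-α)/(2α)})^α]`. -/
def sandwichedRenyiDiv {ι : Type*} [Fintype ι] [DecidableEq ι]
    (α : ℝ) (ρ σ : Matrix ι ι ℂ) : ℝ :=
  (α - 1)⁻¹ * Real.log (retr (Matrix.rpowH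
    (Matrix.rpowH σ ((1 - α) / (2 * α)) * ρ * Matrix.rpowH σ ((1 - α) / (2 * α))) α))


private lemma contOn_finite {s : Set ℝ} (hs : s.Finite) (f : ℝ → ℝ) : ContinuousOn f s := by
  haveI := hs.to_subtype
  rw [continuousOn_iff_continuous_restrict]
  exact continuous_of_discreteTopology

private lemma contOn_spec {ι : Type*} [Fintype ι] [DecidableEq ι] (A : Matrix ι ι ℂ) (f : ℝ → ℝ) :
    ContinuousOn f (spectrum ℝ A) := contOn_finite (Matrix.finite_real_spectrum (A := A)) f

private lemma contOn_img {ι : Type*} [Fintype ι] [DecidableEq ι] (A : Matrix ι ι ℂ) (f g : ℝ → ℝ) :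
    ContinuousOn g (f '' spectrum ℝ A) :=
  contOn_finite ((Matrix.finite_real_spectrum (A := A)).image f) g

private lemma rpowH_eq {ι : Type*} [Fintype ι] [DecidableEq ι] {A : Matrix ι ι ℂ}
    (hA : A.IsHermitian) (p : ℝ) :
    A.rpowH p = cfc (fun x : ℝ => x ^ p) A := by
  rw [Matrix.rpowH, dif_pos hA, hA.cfc_eq, Matrix.IsHermitian.cfc]
  rfl

private lemma cfc_posSemidef {ι : Type*} [Fintype ι] [DecidableEq ι] {A : Matrix ι ι ℂ}
    (hA : A.IsHermitian) (f : ℝ → ℝ)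
    (hf : ∀ i, 0 ≤ f (hA.eigenvalues i)) : (cfc f A).PosSemidef := by
  rw [hA.cfc_eq, Matrix.IsHermitian.cfc]
  have hd : (Matrix.diagonal (RCLike.ofReal ∘ f ∘ hA.eigenvalues) : Matrix ι ι ℂ).PosSemidef :=
    Matrix.posSemidef_diagonal_iff.2 fun i => by
      simpa using (RCLike.ofReal_nonneg (K := ℂ)).2 (hf _)
  simpa [Matrix.star_eq_conjTranspose] using
    hd.mul_mul_conjTranspose_same (hA.eigenvectorUnitary : Matrix ι ι ℂ)

private lemma retr_cfc {ι : Type*} [Fintype ι] [DecidableEq ι] {A : Matrix ι ι ℂ}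
    (hA : A.IsHermitian) (f : ℝ → ℝ) :
    retr (cfc f A) = ∑ i, f (hA.eigenvalues i) := by
  rw [hA.cfc_eq, Matrix.IsHermitian.cfc, Unitary.conjStarAlgAut_apply, retr]
  rw [Matrix.trace_mul_cycle,
    Unitary.star_mul_self_of_mem (SetLike.coe_mem hA.eigenvectorUnitary), Matrix.one_mul,
    Matrix.trace_diagonal]
  simp [Complex.re_sum]

private lemma spec_nonneg {ι : Type*} [Fintype ι] [DecidableEq ι] {A : Matrix ι ι ℂ}
    (hA : A.PosSemidef) :
    ∀ x ∈ spectrum ℝ A, 0 ≤ x := by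
  rw [hA.1.spectrum_real_eq_range_eigenvalues]
  rintro x ⟨i, rfl⟩
  exact hA.eigenvalues_nonneg i

private lemma spec_pos {ι : Type*} [Fintype ι] [DecidableEq ι] {A : Matrix ι ι ℂ}
    (hA : A.PosDef) :
    ∀ x ∈ spectrum ℝ A, 0 < x := by
  rw [hA.1.spectrum_real_eq_range_eigenvalues]
  rintro x ⟨i, rfl⟩
  exact hA.eigenvalues_pos i

set_option maxHeartbeats 1000000 in
/-- the optimizer of the sandwiched variational expression.
For a density operator `ρ`, a positive definite density operator `σ` and `α > 1`
with `α' = α/(α-1)`, the test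
`T = σ^{-1/(2α')} |σ^{-1/(2α')} ρ σ^{-1/(2α')}|^{α-1} σ^{-1/(2α')}`
is positive semidefinite, satisfies `Tr[ρT] > 0`, and attains
`α' log Tr[ρT] - log Tr[(σ^{1/(2α')} T σ^{1/(2α')})^{α'}] = D_α^*(ρ‖σ)`. -/
theorem sandwiched_variational_optimizer
    {ι : Type*} [Fintype ι] [DecidableEq ι]
    (ρ σ : Matrix ι ι ℂ)
    (hρ : ρ.PosSemidef) (hρtr : ρ.trace = 1)
    (hσ : σ.PosDef) (hσtr : σ.trace = 1)
    (α : ℝ) (hα : 1 < α) (α' : ℝ) (hα' : α' = α / (α - 1))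
    (T : Matrix ι ι ℂ)
    (hT : T = Matrix.rpowH σ (-(1 / (2 * α'))) *
        Matrix.rpowH (Matrix.absM (Matrix.rpowH σ (-(1 / (2 * α'))) * ρ *
          Matrix.rpowH σ (-(1 / (2 * α'))))) (α - 1) *
        Matrix.rpowH σ (-(1 / (2 * α')))) :
    T.PosSemidef ∧ 0 < retr (ρ * T) ∧
      α' * Real.log (retr (ρ * T)) -
        Real.log (retr (Matrix.rpowH
          (Matrix.rpowH σ (1 / (2 * α')) * T * Matrix.rpowH σ (1 / (2 * α'))) α')) =
      sandwichedRenyiDiv α ρ σ := by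
  -- basic numerics
  have hα1 : (0:ℝ) < α - 1 := by linarith
  have hα0 : (0:ℝ) < α := by linarith
  have hα'pos : (0:ℝ) < α' := by rw [hα']; positivity
  set c : ℝ := (1 - α) / (2 * α) with hcdef
  have hc : -(1 / (2 * α')) = c := by
    rw [hα', hcdef]; field_simp; ring
  have hcneg : 1 / (2 * α') = -c := by rw [← hc]; ring
  have hσH : σ.IsHermitian := hσ.1
  have hσsa : IsSelfAdjoint σ := hσH.isSelfAdjoint
  have hσspec := spec_pos hσ
  set B : Matrix ι ι ℂ := cfc (fun x : ℝ => x ^ c) σ with hB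
  set B' : Matrix ι ι ℂ := cfc (fun x : ℝ => x ^ (-c)) σ with hB'
  have hrB : Matrix.rpowH σ (-(1 / (2 * α'))) = B := by rw [rpowH_eq hσH, hc]
  have hrB' : Matrix.rpowH σ (1 / (2 * α')) = B' := by rw [rpowH_eq hσH, hcneg]
  have hBsa : IsSelfAdjoint B := cfc_predicate _ σ
  have hB'sa : IsSelfAdjoint B' := cfc_predicate _ σ
  have hBH : B.IsHermitian := hBsa
  have hB'H : B'.IsHermitian := hB'sa
  have hBB' : B' * B = 1 := by
    rw [hB, hB', ← cfc_mul _ _ σ (contOn_spec σ _) (contOn_spec σ _),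
      cfc_congr (g := fun _ : ℝ => (1:ℝ)) (fun x hx => by
        have hx0 := hσspec x hx
        rw [← Real.rpow_add hx0, neg_add_cancel, Real.rpow_zero]),
      cfc_const_one ℝ σ]
  have hB'B : B * B' = 1 := by
    rw [hB, hB', ← cfc_mul _ _ σ (contOn_spec σ _) (contOn_spec σ _),
      cfc_congr (g := fun _ : ℝ => (1:ℝ)) (fun x hx => by
        have hx0 := hσspec x hx
        rw [← Real.rpow_add hx0, add_neg_cancel, Real.rpow_zero]),
      cfc_const_one ℝ σ]
  set X : Matrix ι ι ℂ := B * ρ * B with hX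
  have hXpsd : X.PosSemidef := by
    have h := hρ.mul_mul_conjTranspose_same B
    rwa [hBH.eq] at h
  have hXH : X.IsHermitian := hXpsd.1
  have hXsa : IsSelfAdjoint X := hXH.isSelfAdjoint
  have hXspec := spec_nonneg hXpsd
  -- |X| = X
  have hXX : Xᴴ * X = cfc (fun x : ℝ => x ^ (2:ℝ)) X := by
    have h1 : cfc (fun x : ℝ => x * x) X = X * X := by
      rw [cfc_mul _ _ X (contOn_spec X _) (contOn_spec X _), cfc_id' ℝ X]
    rw [hXH.eq, ← h1]
    exact cfc_congr fun x hx => by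
      rw [show (2:ℝ) = ((2:ℕ):ℝ) by norm_num, Real.rpow_natCast, sq]
  have habs : Matrix.absM X = X := by
    rw [Matrix.absM, hXX, rpowH_eq (cfc_predicate (fun x : ℝ => x ^ (2:ℝ)) X : IsSelfAdjoint _),
      ← cfc_comp' (fun x : ℝ => x ^ (2⁻¹:ℝ)) (fun x : ℝ => x ^ (2:ℝ)) X
        (contOn_img X _ _) (contOn_spec X _) hXsa,
      cfc_congr (g := fun x : ℝ => x) (fun x hx => by
        have hx0 := hXspec x hx
        rw [← Real.rpow_mul hx0]
        norm_num),
      cfc_id' ℝ X]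
  -- M = X^(α-1), T = B M B
  set M : Matrix ι ι ℂ := cfc (fun x : ℝ => x ^ (α - 1)) X with hM
  have hMsa : IsSelfAdjoint M := cfc_predicate _ X
  have hMH : M.IsHermitian := hMsa
  have hTM : T = B * M * B := by
    rw [hT, hrB, ← hX, habs, rpowH_eq hXH, ← hM]
  have hMpsd : M.PosSemidef := cfc_posSemidef hXH _ fun i =>
    Real.rpow_nonneg (hXpsd.eigenvalues_nonneg i) _
  have hTpsd : T.PosSemidef := by
    have h := hMpsd.mul_mul_conjTranspose_same B
    rwa [hBH.eq, ← hTM] at h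
  -- X ≠ 0, hence some eigenvalue positive
  have hρX : B' * X * B' = ρ := by
    have : B' * (B * ρ * B) * B' = (B' * B) * ρ * (B * B') := by
      simp only [Matrix.mul_assoc]
    rw [hX, this, hBB', hB'B, Matrix.one_mul, Matrix.mul_one]
  have hXne : ∃ j, hXH.eigenvalues j ≠ 0 := by
    by_contra h
    push_neg at h
    have hX0 : X = 0 := by
      rw [hXH.spectral_theorem]
      have hd : Matrix.diagonal (RCLike.ofReal ∘ hXH.eigenvalues) = (0 : Matrix ι ι ℂ) := by
        ext i k
        rcases eq_or_ne i k with rfl | hik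
        · simp [h i]
        · simp [Matrix.diagonal_apply_ne _ hik]
      rw [hd, map_zero]
    rw [hX0, Matrix.mul_zero, Matrix.zero_mul] at hρX
    rw [← hρX] at hρtr
    simp at hρtr
  -- trace of ρT
  have hXMtr : X * M = cfc (fun x : ℝ => x ^ α) X := by
    conv_lhs => rw [← cfc_id' ℝ X hXsa]
    rw [← cfc_mul _ _ X (contOn_spec X _) (contOn_spec X _)]
    exact cfc_congr fun x hx => by
      have hx0 := hXspec x hx
      have h2 : x ^ ((1:ℝ) + (α - 1)) = x ^ (1:ℝ) * x ^ (α - 1) :=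
        Real.rpow_add' hx0 (by norm_num; linarith)
      rw [Real.rpow_one] at h2
      rw [← h2, show (1:ℝ) + (α - 1) = α by ring]
  have hρTtr : (ρ * T).trace = (cfc (fun x : ℝ => x ^ α) X).trace := by
    rw [hTM, show ρ * (B * M * B) = (ρ * B * M) * B by simp only [Matrix.mul_assoc],
      Matrix.trace_mul_comm,
      show B * (ρ * B * M) = X * M by rw [hX]; simp only [Matrix.mul_assoc],
      hXMtr]
  have hretr1 : retr (ρ * T) = ∑ i, hXH.eigenvalues i ^ α := by
    have h := retr_cfc hXH (fun x => x ^ α)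
    simp only [retr] at h ⊢
    rw [hρTtr, h]
  obtain ⟨j, hj⟩ := hXne
  have hLpos : 0 < ∑ i, hXH.eigenvalues i ^ α := by
    apply Finset.sum_pos' (fun i _ => Real.rpow_nonneg (hXpsd.eigenvalues_nonneg i) α)
    exact ⟨j, Finset.mem_univ j,
      Real.rpow_pos_of_pos
        (lt_of_le_of_ne (hXpsd.eigenvalues_nonneg j) (Ne.symm hj)) α⟩
  have hBTB : B' * T * B' = M := by
    rw [hTM, show B' * (B * M * B) * B' = (B' * B) * M * (B * B') by
      simp only [Matrix.mul_assoc], hBB', hB'B, Matrix.one_mul, Matrix.mul_one]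
  have hinner : Matrix.rpowH (Matrix.rpowH σ (1 / (2 * α')) * T *
      Matrix.rpowH σ (1 / (2 * α'))) α' = cfc (fun x : ℝ => x ^ α) X := by
    rw [hrB', hBTB, rpowH_eq hMH, hM,
      ← cfc_comp' (fun x : ℝ => x ^ α') (fun x : ℝ => x ^ (α - 1)) X
        (contOn_img X _ _) (contOn_spec X _) hXsa]
    exact cfc_congr fun x hx => by
      have hx0 := hXspec x hx
      rw [← Real.rpow_mul hx0,
        show (α - 1) * α' = α by rw [hα']; field_simp]
  have hretr2 : retr (Matrix.rpowH (Matrix.rpowH σ (1 / (2 * α')) * T *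
      Matrix.rpowH σ (1 / (2 * α'))) α') = ∑ i, hXH.eigenvalues i ^ α := by
    rw [hinner]
    exact retr_cfc hXH (fun x => x ^ α)
  have hRHS : sandwichedRenyiDiv α ρ σ =
      (α - 1)⁻¹ * Real.log (∑ i, hXH.eigenvalues i ^ α) := by
    have harg : Matrix.rpowH (Matrix.rpowH σ ((1 - α) / (2 * α)) * ρ *
        Matrix.rpowH σ ((1 - α) / (2 * α))) α = cfc (fun x : ℝ => x ^ α) X := by
      rw [rpowH_eq hσH, ← hcdef, ← hB, ← hX, rpowH_eq hXH]
    rw [sandwichedRenyiDiv, harg, retr_cfc hXH]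
  refine ⟨hTpsd, by rw [hretr1]; exact hLpos, ?_⟩
  rw [hretr1, hretr2, hRHS]
  have h' : α' - 1 = (α - 1)⁻¹ := by
    rw [hα']
    field_simp
    ring
  linear_combination Real.log (∑ i, hXH.eigenvalues i ^ α) * h'


end
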